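/- Error estimate between implicit and semi-implicit iterates for the regularized total variation flow: Let (Ω, μ) be a measure space, d ≥ 1, τ > 0, ε > 0, M ≥ 0, K ≥ 1 and E₀ ≥ 0. For k = 0, …, K let ũ^k, u^k ∈ L²(μ; ℝ) and g̃^k, g^k ∈ L²(μ; ℝ^d) with ũ⁰ = u⁰ and g̃⁰ = g⁰, and set δ^k = ũ^k − u^k and h^k = g̃^k − g^k. Assume: (a) for every k = 1, …, K, ∫_Ω (d_t δ^k) δ^k dμ + ∫_Ω ( g̃^k/|g̃^k|_ε − g^k/|g^{k-1}|_ε ) · h^k dμ = 0; (b) the inverse-type estimate ‖h^k‖_{L²(μ)} ≤ M ‖δ^k‖_{L²(μ)} for every k; (c) the dissipation bound (τ²/2) Σ_{k=1}^K ∫_Ω |d_t g^k|² / |g^{k-1}|_ε dμ ≤ E₀. Then max_{k=0,…,K} ‖δ^k‖_{L²(μ)} ≤ 2√2 · τ^{1/2} M ε^{-1/2} (E₀ K τ)^{1/2}. -/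

import Mathlib

open RealInnerProductSpace MeasureTheory

/-- The standard regularized euclidean length `|a|_ε = (|a|² + ε²)^{1/2}`. -/
noncomputable def regLen {d : ℕ} (ε : ℝ) (a : EuclideanSpace ℝ (Fin d)) : ℝ :=
  Real.sqrt (‖a‖^2 + ε^2)

namespace TVAux

variable {d : ℕ} {ε : ℝ}

lemma regLen_pos (hε : 0 < ε) (a : EuclideanSpace ℝ (Fin d)) : 0 < regLen ε a :=
  Real.sqrt_pos.2 (by positivity)

lemma eps_le_regLen (hε : 0 < ε) (a : EuclideanSpace ℝ (Fin d)) : ε ≤ regLen ε a := by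
  calc ε = Real.sqrt (ε^2) := (Real.sqrt_sq hε.le).symm
    _ ≤ regLen ε a := Real.sqrt_le_sqrt (by nlinarith [sq_nonneg ‖a‖])

lemma norm_le_regLen (a : EuclideanSpace ℝ (Fin d)) : ‖a‖ ≤ regLen ε a := by
  calc ‖a‖ = Real.sqrt (‖a‖^2) := (Real.sqrt_sq (norm_nonneg a)).symm
    _ ≤ regLen ε a := Real.sqrt_le_sqrt (by nlinarith [sq_nonneg ε])

/-- scalar 1-Lipschitz bound for `x ↦ √(x² + ε²)` on nonnegatives -/
lemma sqrt_aux {x y : ℝ} (hx : 0 ≤ x) (hxy : x ≤ y) :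
    Real.sqrt (y^2 + ε^2) - Real.sqrt (x^2 + ε^2) ≤ y - x := by
  have h1 : x ≤ Real.sqrt (x^2 + ε^2) := by
    calc x = Real.sqrt (x^2) := (Real.sqrt_sq hx).symm
      _ ≤ _ := Real.sqrt_le_sqrt (by nlinarith [sq_nonneg ε])
  have h0 : (0:ℝ) ≤ x^2 + ε^2 := by positivity
  have h2 : Real.sqrt (y^2 + ε^2) ≤ (y - x) + Real.sqrt (x^2 + ε^2) := by
    have hsq : y^2 + ε^2 ≤ ((y - x) + Real.sqrt (x^2 + ε^2))^2 := by
      nlinarith [Real.sq_sqrt h0, mul_le_mul_of_nonneg_left h1 (sub_nonneg.2 hxy)]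
    calc Real.sqrt (y^2 + ε^2) ≤ Real.sqrt (((y - x) + Real.sqrt (x^2 + ε^2))^2) :=
        Real.sqrt_le_sqrt hsq
      _ = (y - x) + Real.sqrt (x^2 + ε^2) := Real.sqrt_sq (by linarith [Real.sqrt_nonneg (x^2+ε^2)])
  linarith

lemma regLen_lipschitz (ε : ℝ) (b c : EuclideanSpace ℝ (Fin d)) :
    |regLen ε b - regLen ε c| ≤ ‖b - c‖ := by
  have hbc : |‖b‖ - ‖c‖| ≤ ‖b - c‖ := abs_norm_sub_norm_le b c
  rw [abs_le] at hbc ⊢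
  have hnbc : (0:ℝ) ≤ ‖b - c‖ := norm_nonneg _
  unfold regLen
  rcases le_total ‖b‖ ‖c‖ with h | h
  · have h1 := sqrt_aux (ε := ε) (norm_nonneg b) h
    have h2 : Real.sqrt (‖b‖^2 + ε^2) ≤ Real.sqrt (‖c‖^2 + ε^2) :=
      Real.sqrt_le_sqrt (by nlinarith [norm_nonneg b])
    constructor <;> linarith
  · have h1 := sqrt_aux (ε := ε) (norm_nonneg c) h
    have h2 : Real.sqrt (‖c‖^2 + ε^2) ≤ Real.sqrt (‖b‖^2 + ε^2) :=
      Real.sqrt_le_sqrt (by nlinarith [norm_nonneg c])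
    constructor <;> linarith

lemma mono_ineq (hε : 0 < ε) (a b : EuclideanSpace ℝ (Fin d)) :
    0 ≤ ⟪(regLen ε a)⁻¹ • a - (regLen ε b)⁻¹ • b, a - b⟫ := by
  have hra := regLen_pos hε a
  have hrb := regLen_pos hε b
  have ht : ⟪a, b⟫ ≤ ‖a‖ * ‖b‖ := real_inner_le_norm a b
  have hkey : ∀ u v : EuclideanSpace ℝ (Fin d), ‖u‖ ≤ ‖v‖ →
      ‖u‖ * regLen ε v ≤ ‖v‖ * regLen ε u := by
    intro u v huv
    have h1 : ‖u‖ * regLen ε v = Real.sqrt (‖u‖^2 * (‖v‖^2 + ε^2)) := by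
      rw [Real.sqrt_mul (sq_nonneg _), Real.sqrt_sq (norm_nonneg u)]; rfl
    have h2 : ‖v‖ * regLen ε u = Real.sqrt (‖v‖^2 * (‖u‖^2 + ε^2)) := by
      rw [Real.sqrt_mul (sq_nonneg _), Real.sqrt_sq (norm_nonneg v)]; rfl
    rw [h1, h2]
    refine Real.sqrt_le_sqrt ?_
    nlinarith [mul_le_mul huv huv (norm_nonneg u) (norm_nonneg v), sq_nonneg ε]
  simp only [inner_sub_left, inner_sub_right, real_inner_smul_left,
    real_inner_self_eq_norm_sq]
  rw [real_inner_comm a b]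
  rcases le_total ‖a‖ ‖b‖ with h | h
  · have hk := hkey a b h
    have hk' : (regLen ε a)⁻¹ * ‖a‖ ≤ (regLen ε b)⁻¹ * ‖b‖ := by
      rw [inv_mul_eq_div, inv_mul_eq_div, div_le_div_iff₀ hra hrb]; linarith
    nlinarith [mul_nonneg (sub_nonneg.2 h) (sub_nonneg.2 hk'),
      mul_nonneg (add_nonneg (inv_nonneg.2 hra.le) (inv_nonneg.2 hrb.le)) (sub_nonneg.2 ht)]
  · have hk := hkey b a h
    have hk' : (regLen ε b)⁻¹ * ‖b‖ ≤ (regLen ε a)⁻¹ * ‖a‖ := by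
      rw [inv_mul_eq_div, inv_mul_eq_div, div_le_div_iff₀ hrb hra]; linarith
    nlinarith [mul_nonneg (sub_nonneg.2 h) (sub_nonneg.2 hk'),
      mul_nonneg (add_nonneg (inv_nonneg.2 hra.le) (inv_nonneg.2 hrb.le)) (sub_nonneg.2 ht)]

lemma inv_diff_bound (hε : 0 < ε) (b c : EuclideanSpace ℝ (Fin d)) :
    |(regLen ε b)⁻¹ - (regLen ε c)⁻¹| * ‖b‖ ≤ ‖b - c‖ / regLen ε c := by
  have hrb := regLen_pos hε b
  have hrc := regLen_pos hε c
  have h1 : (regLen ε b)⁻¹ - (regLen ε c)⁻¹ = (regLen ε c - regLen ε b) / (regLen ε b * regLen ε c) := by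
    field_simp
  rw [h1, abs_div, abs_of_pos (mul_pos hrb hrc)]
  have h2 : |regLen ε c - regLen ε b| ≤ ‖b - c‖ := by
    rw [abs_sub_comm]; exact regLen_lipschitz ε b c
  have h3 : ‖b‖ ≤ regLen ε b := norm_le_regLen b
  have e1 : |regLen ε c - regLen ε b| / (regLen ε b * regLen ε c) ≤
      ‖b - c‖ / (regLen ε b * regLen ε c) := by gcongr
  calc |regLen ε c - regLen ε b| / (regLen ε b * regLen ε c) * ‖b‖
      ≤ ‖b - c‖ / (regLen ε b * regLen ε c) * regLen ε b :=
        mul_le_mul e1 h3 (norm_nonneg b) (by positivity)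
    _ = ‖b - c‖ / regLen ε c := by field_simp

lemma pointwise_lb (hε : 0 < ε) (a b c : EuclideanSpace ℝ (Fin d)) :
    -(‖b - c‖ / regLen ε c * ‖a - b‖) ≤
      ⟪(regLen ε a)⁻¹ • a - (regLen ε c)⁻¹ • b, a - b⟫ := by
  have hsplit : (regLen ε a)⁻¹ • a - (regLen ε c)⁻¹ • b
      = ((regLen ε a)⁻¹ • a - (regLen ε b)⁻¹ • b) + ((regLen ε b)⁻¹ - (regLen ε c)⁻¹) • b := by
    rw [sub_smul]; abel
  rw [hsplit, inner_add_left]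
  have h1 := mono_ineq hε a b
  have h2 : -(|(regLen ε b)⁻¹ - (regLen ε c)⁻¹| * ‖b‖ * ‖a - b‖) ≤
      ⟪((regLen ε b)⁻¹ - (regLen ε c)⁻¹) • b, a - b⟫ := by
    rw [real_inner_smul_left]
    have hib := abs_real_inner_le_norm b (a - b)
    have habs : |((regLen ε b)⁻¹ - (regLen ε c)⁻¹) * ⟪b, a - b⟫| ≤
        |(regLen ε b)⁻¹ - (regLen ε c)⁻¹| * (‖b‖ * ‖a - b‖) := by
      rw [abs_mul]
      exact mul_le_mul_of_nonneg_left hib (abs_nonneg _)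
    have := neg_abs_le (((regLen ε b)⁻¹ - (regLen ε c)⁻¹) * ⟪b, a - b⟫)
    nlinarith
  have h3 : |(regLen ε b)⁻¹ - (regLen ε c)⁻¹| * ‖b‖ * ‖a - b‖ ≤
      ‖b - c‖ / regLen ε c * ‖a - b‖ :=
    mul_le_mul_of_nonneg_right (inv_diff_bound hε b c) (norm_nonneg _)
  linarith

end TVAux

namespace TVAux

lemma int_mul {Ω : Type*} [MeasurableSpace Ω] {μ : Measure Ω} {f g : Ω → ℝ}
    (hf : MemLp f 2 μ) (hg : MemLp g 2 μ) : Integrable (fun x => f x * g x) μ := by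
  have h : Integrable (fun x => (f x ^ 2 + g x ^ 2) / 2) μ :=
    (hf.integrable_sq.add hg.integrable_sq).div_const 2
  refine h.mono' (hf.aestronglyMeasurable.mul hg.aestronglyMeasurable) ?_
  filter_upwards with x
  rw [Real.norm_eq_abs, abs_mul]
  nlinarith [sq_nonneg (|f x| - |g x|), sq_abs (f x), sq_abs (g x),
    abs_nonneg (f x), abs_nonneg (g x)]

lemma integral_CS {Ω : Type*} [MeasurableSpace Ω] {μ : Measure Ω} {f g : Ω → ℝ}
    (hf : MemLp f 2 μ) (hg : MemLp g 2 μ) (hf0 : ∀ x, 0 ≤ f x) (hg0 : ∀ x, 0 ≤ g x) :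
    ∫ x, f x * g x ∂μ ≤ Real.sqrt (∫ x, f x ^ 2 ∂μ) * Real.sqrt (∫ x, g x ^ 2 ∂μ) := by
  have h2 : (2:ℝ).HolderConjugate 2 := ⟨by norm_num, by norm_num, by norm_num⟩
  have hf' : MemLp f (ENNReal.ofReal 2) μ := by rw [ENNReal.ofReal_ofNat]; exact hf
  have hg' : MemLp g (ENNReal.ofReal 2) μ := by rw [ENNReal.ofReal_ofNat]; exact hg
  have := MeasureTheory.integral_mul_le_Lp_mul_Lq_of_nonneg h2
    (Filter.Eventually.of_forall hf0) (Filter.Eventually.of_forall hg0) hf' hg'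
  simp only [Real.rpow_two] at this
  rw [Real.sqrt_eq_rpow, Real.sqrt_eq_rpow]
  exact this

end TVAux

/-- Error estimate between the implicit iterates `(ũ^k, g̃^k)` and semi-implicit
iterates `(u^k, g^k)` for the regularized total variation flow
(Proposition 4.1, abstract form): under (a) the tested difference of the schemes,
(b) the inverse-type estimate, and (c) the dissipation bound, the differences
`δ^k = ũ^k − u^k` satisfy
`max_k ‖δ^k‖_{L²} ≤ 2√2 τ^{1/2} M ε^{-1/2} (E₀ K τ)^{1/2}`. -/
theorem stmt3 {Ω : Type*} [MeasurableSpace Ω] (μ : Measure Ω)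
    (d : ℕ) (hd : 1 ≤ d) (τ ε M : ℝ) (hτ : 0 < τ) (hε : 0 < ε) (hM : 0 ≤ M)
    (K : ℕ) (hK : 1 ≤ K) (E₀ : ℝ) (hE₀ : 0 ≤ E₀)
    (ut u : ℕ → Ω → ℝ) (gt g : ℕ → Ω → EuclideanSpace ℝ (Fin d))
    (hut : ∀ k ≤ K, MemLp (ut k) 2 μ)
    (hu : ∀ k ≤ K, MemLp (u k) 2 μ)
    (hgt : ∀ k ≤ K, MemLp (gt k) 2 μ)
    (hg : ∀ k ≤ K, MemLp (g k) 2 μ)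
    (h0 : ut 0 = u 0) (hg0 : gt 0 = g 0)
    (ha : ∀ k, 1 ≤ k → k ≤ K →
      (∫ x, (((ut k x - u k x) - (ut (k-1) x - u (k-1) x)) / τ) * (ut k x - u k x) ∂μ)
        + ∫ x, ⟪(regLen ε (gt k x))⁻¹ • gt k x - (regLen ε (g (k-1) x))⁻¹ • g k x,
                gt k x - g k x⟫ ∂μ = 0)
    (hb : ∀ k ≤ K, Real.sqrt (∫ x, ‖gt k x - g k x‖^2 ∂μ)
        ≤ M * Real.sqrt (∫ x, (ut k x - u k x)^2 ∂μ))
    (hc : (τ^2 / 2) * ∑ k ∈ Finset.Icc 1 K,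
        ∫ x, ‖(1/τ) • (g k x - g (k-1) x)‖^2 / regLen ε (g (k-1) x) ∂μ ≤ E₀) :
    ∀ k ≤ K, Real.sqrt (∫ x, (ut k x - u k x)^2 ∂μ)
      ≤ 2 * Real.sqrt 2 * τ ^ ((1:ℝ)/2) * M * ε ^ (-(1:ℝ)/2)
          * (E₀ * K * τ) ^ ((1:ℝ)/2) := by
  set I : ℕ → ℝ := fun j => ∫ x, (ut j x - u j x)^2 ∂μ with hIdef
  set S : ℕ → ℝ := fun j => ∫ x, ‖g j x - g (j-1) x‖^2 / regLen ε (g (j-1) x) ∂μ with hSdef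
  have hInn : ∀ j, 0 ≤ I j := fun j => integral_nonneg (fun x => sq_nonneg _)
  have hSnn : ∀ j, 0 ≤ S j := fun j =>
    integral_nonneg (fun x => div_nonneg (sq_nonneg _) (Real.sqrt_nonneg _))
  have hI0 : I 0 = 0 := by simp [hIdef, h0]
  -- dissipation sum bound
  have sumS : ∑ j ∈ Finset.Icc 1 K, S j ≤ 2 * E₀ := by
    have hSk : ∀ j : ℕ,
        (∫ x, ‖(1/τ) • (g j x - g (j-1) x)‖^2 / regLen ε (g (j-1) x) ∂μ) = (1/τ)^2 * S j := by
      intro j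
      rw [hSdef, ← integral_const_mul]
      congr 1; funext x
      rw [norm_smul, Real.norm_eq_abs, abs_of_pos (by positivity : (0:ℝ) < 1/τ)]
      ring
    have h1 : ∑ k ∈ Finset.Icc 1 K,
        (∫ x, ‖(1/τ) • (g k x - g (k-1) x)‖^2 / regLen ε (g (k-1) x) ∂μ)
        = (1/τ)^2 * ∑ j ∈ Finset.Icc 1 K, S j := by
      rw [Finset.mul_sum]; exact Finset.sum_congr rfl fun j _ => hSk j
    rw [h1] at hc
    have heq : (τ^2/2) * ((1/τ)^2 * ∑ j ∈ Finset.Icc 1 K, S j)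
        = (∑ j ∈ Finset.Icc 1 K, S j) / 2 := by
      have hτ0 : τ ≠ 0 := ne_of_gt hτ
      field_simp
    rw [heq] at hc; linarith
  -- per-step inequality
  have key : ∀ m : ℕ, m + 1 ≤ K →
      I (m+1) ≤ I m + 2*τ*((Real.sqrt ε)⁻¹ * (Real.sqrt (S (m+1)) * (M * Real.sqrt (I (m+1))))) := by
    intro m hmK
    have hmK' : m ≤ K := by omega
    have mδ1 : MemLp (fun x => ut (m+1) x - u (m+1) x) 2 μ := (hut _ hmK).sub (hu _ hmK)
    have mδ0 : MemLp (fun x => ut m x - u m x) 2 μ := (hut _ hmK').sub (hu _ hmK')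
    have mq : MemLp (fun x => ‖gt (m+1) x - g (m+1) x‖) 2 μ := ((hgt _ hmK).sub (hg _ hmK)).norm
    have hgm := hg _ hmK'
    have hg1 := hg _ hmK
    have hcont : Continuous fun v : EuclideanSpace ℝ (Fin d) => Real.sqrt (regLen ε v) := by
      unfold regLen; fun_prop
    have pden : AEStronglyMeasurable (fun x => Real.sqrt (regLen ε (g m x))) μ :=
      hcont.comp_aestronglyMeasurable hgm.aestronglyMeasurable
    have pnum : AEStronglyMeasurable (fun x => ‖g (m+1) x - g m x‖) μ :=
      ((hg1.sub hgm).aestronglyMeasurable).norm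
    have paesm : AEStronglyMeasurable
        (fun x => ‖g (m+1) x - g m x‖ / Real.sqrt (regLen ε (g m x))) μ :=
      (pnum.aemeasurable.div pden.aemeasurable).aestronglyMeasurable
    have hΔsq : Integrable (fun x => ‖g (m+1) x - g m x‖^2) μ := by
      have := ((hg1.sub hgm).norm).integrable_sq
      exact this
    have psq_int : Integrable
        (fun x => (‖g (m+1) x - g m x‖ / Real.sqrt (regLen ε (g m x)))^2) μ := by
      refine (hΔsq.const_mul ε⁻¹).mono' (paesm.pow 2) ?_
      filter_upwards with x
      have hr0 : (0:ℝ) ≤ regLen ε (g m x) := Real.sqrt_nonneg _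
      rw [Real.norm_eq_abs, abs_of_nonneg (by positivity), div_pow, Real.sq_sqrt hr0]
      calc ‖g (m+1) x - g m x‖^2 / regLen ε (g m x)
          ≤ ‖g (m+1) x - g m x‖^2 / ε :=
            div_le_div_of_nonneg_left (sq_nonneg _) hε (TVAux.eps_le_regLen hε _)
        _ = ε⁻¹ * ‖g (m+1) x - g m x‖^2 := div_eq_inv_mul _ _
    have mp : MemLp (fun x => ‖g (m+1) x - g m x‖ / Real.sqrt (regLen ε (g m x))) 2 μ :=
      (memLp_two_iff_integrable_sq paesm).2 psq_int
    have hpS : (∫ x, (‖g (m+1) x - g m x‖ / Real.sqrt (regLen ε (g m x)))^2 ∂μ) = S (m+1) := by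
      rw [hSdef]
      simp only [Nat.add_sub_cancel]
      congr 1; funext x
      rw [div_pow, Real.sq_sqrt (show (0:ℝ) ≤ regLen ε (g m x) from Real.sqrt_nonneg _)]
    -- the tested difference of the schemes
    have haK := ha (m+1) (Nat.le_add_left 1 m) hmK
    simp only [Nat.add_sub_cancel] at haK
    -- A-part manipulation
    have intA1 : Integrable (fun x => (ut (m+1) x - u (m+1) x) * (ut (m+1) x - u (m+1) x)) μ :=
      TVAux.int_mul mδ1 mδ1
    have intA2 : Integrable (fun x => (ut m x - u m x) * (ut (m+1) x - u (m+1) x)) μ :=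
      TVAux.int_mul mδ0 mδ1
    have eqI1 : (∫ x, (ut (m+1) x - u (m+1) x) * (ut (m+1) x - u (m+1) x) ∂μ) = I (m+1) := by
      rw [hIdef]; congr 1; funext x; ring
    have hAeq : (∫ x, (((ut (m+1) x - u (m+1) x) - (ut m x - u m x)) / τ)
          * (ut (m+1) x - u (m+1) x) ∂μ)
        = (1/τ) * (I (m+1) - ∫ x, (ut m x - u m x) * (ut (m+1) x - u (m+1) x) ∂μ) := by
      rw [← eqI1, ← integral_sub intA1 intA2, ← integral_const_mul]
      congr 1; funext x; ring
    have hJ : (∫ x, (ut m x - u m x) * (ut (m+1) x - u (m+1) x) ∂μ) ≤ (I m + I (m+1))/2 := by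
      have intC : Integrable (fun x => ((ut m x - u m x)^2 + (ut (m+1) x - u (m+1) x)^2)/2) μ :=
        (mδ0.integrable_sq.add mδ1.integrable_sq).div_const 2
      have h := integral_mono intA2 intC
        (fun x => by nlinarith [sq_nonneg ((ut m x - u m x) - (ut (m+1) x - u (m+1) x))])
      have h2 : (∫ x, ((ut m x - u m x)^2 + (ut (m+1) x - u (m+1) x)^2)/2 ∂μ)
          = (I m + I (m+1))/2 := by
        rw [integral_div, integral_add mδ0.integrable_sq mδ1.integrable_sq, hIdef]
      linarith [h, h2.le, h2.ge]
    -- B-part lower bound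
    have pw : ∀ x, -((Real.sqrt ε)⁻¹ * ((‖g (m+1) x - g m x‖ / Real.sqrt (regLen ε (g m x)))
          * ‖gt (m+1) x - g (m+1) x‖))
        ≤ ⟪(regLen ε (gt (m+1) x))⁻¹ • gt (m+1) x - (regLen ε (g m x))⁻¹ • g (m+1) x,
            gt (m+1) x - g (m+1) x⟫ := by
      intro x
      refine le_trans (neg_le_neg ?_) (TVAux.pointwise_lb hε _ _ _)
      have hr0 : (0:ℝ) ≤ regLen ε (g m x) := Real.sqrt_nonneg _
      have hrε : ε ≤ regLen ε (g m x) := TVAux.eps_le_regLen hε _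
      have hsε : (0:ℝ) < Real.sqrt ε := Real.sqrt_pos.2 hε
      have hsr : Real.sqrt ε ≤ Real.sqrt (regLen ε (g m x)) := Real.sqrt_le_sqrt hrε
      have hsr0 : (0:ℝ) < Real.sqrt (regLen ε (g m x)) := lt_of_lt_of_le hsε hsr
      have h1 : ‖g (m+1) x - g m x‖ / regLen ε (g m x)
          ≤ (Real.sqrt ε)⁻¹ * (‖g (m+1) x - g m x‖ / Real.sqrt (regLen ε (g m x))) := by
        have hrr : regLen ε (g m x) = Real.sqrt (regLen ε (g m x)) * Real.sqrt (regLen ε (g m x)) :=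
          (Real.mul_self_sqrt hr0).symm
        have hle : Real.sqrt ε * Real.sqrt (regLen ε (g m x)) ≤ regLen ε (g m x) :=
          calc Real.sqrt ε * Real.sqrt (regLen ε (g m x))
              ≤ Real.sqrt (regLen ε (g m x)) * Real.sqrt (regLen ε (g m x)) :=
                mul_le_mul_of_nonneg_right hsr hsr0.le
            _ = regLen ε (g m x) := Real.mul_self_sqrt hr0
        have step : ‖g (m+1) x - g m x‖ / regLen ε (g m x)
            ≤ ‖g (m+1) x - g m x‖ / (Real.sqrt ε * Real.sqrt (regLen ε (g m x))) :=
          div_le_div_of_nonneg_left (norm_nonneg _) (by positivity) hle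
        have eq2 : ‖g (m+1) x - g m x‖ / (Real.sqrt ε * Real.sqrt (regLen ε (g m x)))
            = (Real.sqrt ε)⁻¹ * (‖g (m+1) x - g m x‖ / Real.sqrt (regLen ε (g m x))) := by
          field_simp
        rw [eq2] at step; exact step
      calc ‖g (m+1) x - g m x‖ / regLen ε (g m x) * ‖gt (m+1) x - g (m+1) x‖
          ≤ (Real.sqrt ε)⁻¹ * (‖g (m+1) x - g m x‖ / Real.sqrt (regLen ε (g m x)))
            * ‖gt (m+1) x - g (m+1) x‖ := mul_le_mul_of_nonneg_right h1 (norm_nonneg _)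
        _ = (Real.sqrt ε)⁻¹ * ((‖g (m+1) x - g m x‖ / Real.sqrt (regLen ε (g m x)))
            * ‖gt (m+1) x - g (m+1) x‖) := by ring
    have int_pq : Integrable (fun x => (‖g (m+1) x - g m x‖ / Real.sqrt (regLen ε (g m x)))
        * ‖gt (m+1) x - g (m+1) x‖) μ := TVAux.int_mul mp mq
    have int_r : Integrable (fun x => (Real.sqrt ε)⁻¹
        * ((‖g (m+1) x - g m x‖ / Real.sqrt (regLen ε (g m x)))
        * ‖gt (m+1) x - g (m+1) x‖)) μ := int_pq.const_mul _
    have hRbound : (∫ x, (Real.sqrt ε)⁻¹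
          * ((‖g (m+1) x - g m x‖ / Real.sqrt (regLen ε (g m x)))
          * ‖gt (m+1) x - g (m+1) x‖) ∂μ)
        ≤ (Real.sqrt ε)⁻¹ * (Real.sqrt (S (m+1)) * (M * Real.sqrt (I (m+1)))) := by
      rw [integral_const_mul]
      refine mul_le_mul_of_nonneg_left ?_ (inv_nonneg.2 (Real.sqrt_nonneg _))
      have hCS := TVAux.integral_CS mp mq
        (fun x => div_nonneg (norm_nonneg _) (Real.sqrt_nonneg _)) (fun x => norm_nonneg _)
      have hbq : Real.sqrt (∫ x, ‖gt (m+1) x - g (m+1) x‖^2 ∂μ)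
          ≤ M * Real.sqrt (I (m+1)) := hb (m+1) hmK
      calc (∫ x, (‖g (m+1) x - g m x‖ / Real.sqrt (regLen ε (g m x)))
            * ‖gt (m+1) x - g (m+1) x‖ ∂μ)
          ≤ Real.sqrt (∫ x, (‖g (m+1) x - g m x‖ / Real.sqrt (regLen ε (g m x)))^2 ∂μ)
            * Real.sqrt (∫ x, ‖gt (m+1) x - g (m+1) x‖^2 ∂μ) := hCS
        _ = Real.sqrt (S (m+1)) * Real.sqrt (∫ x, ‖gt (m+1) x - g (m+1) x‖^2 ∂μ) := by
            rw [hpS]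
        _ ≤ Real.sqrt (S (m+1)) * (M * Real.sqrt (I (m+1))) :=
            mul_le_mul_of_nonneg_left hbq (Real.sqrt_nonneg _)
    have hBlb : -(∫ x, ⟪(regLen ε (gt (m+1) x))⁻¹ • gt (m+1) x
          - (regLen ε (g m x))⁻¹ • g (m+1) x, gt (m+1) x - g (m+1) x⟫ ∂μ)
        ≤ (Real.sqrt ε)⁻¹ * (Real.sqrt (S (m+1)) * (M * Real.sqrt (I (m+1)))) := by
      by_cases hint : Integrable (fun x => ⟪(regLen ε (gt (m+1) x))⁻¹ • gt (m+1) x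
          - (regLen ε (g m x))⁻¹ • g (m+1) x, gt (m+1) x - g (m+1) x⟫) μ
      · have hmono : (∫ x, -((Real.sqrt ε)⁻¹
            * ((‖g (m+1) x - g m x‖ / Real.sqrt (regLen ε (g m x)))
            * ‖gt (m+1) x - g (m+1) x‖)) ∂μ)
            ≤ ∫ x, ⟪(regLen ε (gt (m+1) x))⁻¹ • gt (m+1) x
              - (regLen ε (g m x))⁻¹ • g (m+1) x, gt (m+1) x - g (m+1) x⟫ ∂μ :=
          integral_mono int_r.neg hint (fun x => pw x)
        rw [integral_neg] at hmono
        linarith [hRbound]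
      · rw [integral_undef hint]
        have hnn : (0:ℝ) ≤ (Real.sqrt ε)⁻¹
            * (Real.sqrt (S (m+1)) * (M * Real.sqrt (I (m+1)))) :=
          mul_nonneg (inv_nonneg.2 (Real.sqrt_nonneg _))
            (mul_nonneg (Real.sqrt_nonneg _) (mul_nonneg hM (Real.sqrt_nonneg _)))
        simpa using hnn
    -- combine
    have hsqI : Real.sqrt (I (m+1)) * Real.sqrt (I (m+1)) = I (m+1) :=
      Real.mul_self_sqrt (hInn _)
    have hτA : τ * ((1/τ) * (I (m+1) - ∫ x, (ut m x - u m x) * (ut (m+1) x - u (m+1) x) ∂μ))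
        = I (m+1) - ∫ x, (ut m x - u m x) * (ut (m+1) x - u (m+1) x) ∂μ := by
      field_simp
    rw [hAeq] at haK
    have hP : (1/τ) * (I (m+1) - ∫ x, (ut m x - u m x) * (ut (m+1) x - u (m+1) x) ∂μ)
        ≤ (Real.sqrt ε)⁻¹ * (Real.sqrt (S (m+1)) * (M * Real.sqrt (I (m+1)))) := by
      linarith [hBlb]
    have hPmul := mul_le_mul_of_nonneg_left hP hτ.le
    rw [hτA] at hPmul
    linarith [hJ, hPmul]
  -- telescoping
  have chain : ∀ m, m ≤ K → I m ≤ ∑ j ∈ Finset.Icc 1 m,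
      (2*τ*((Real.sqrt ε)⁻¹ * (Real.sqrt (S j) * (M * Real.sqrt (I j))))) := by
    intro m
    induction m with
    | zero => intro _; simp [hI0]
    | succ n ih =>
      intro hn
      have h1 := key n hn
      have h2 := ih (by omega)
      rw [Finset.sum_Icc_succ_top (Nat.le_add_left 1 n)]
      linarith
  -- maximum
  obtain ⟨m₀, hm₀mem, hm₀⟩ := Finset.exists_max_image (Finset.range (K+1))
    (fun j => Real.sqrt (I j)) ⟨0, Finset.mem_range.2 (by omega)⟩
  have hm₀K : m₀ ≤ K := by have := Finset.mem_range.1 hm₀mem; omega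
  set N := Real.sqrt (I m₀) with hNdef
  have hNnn : 0 ≤ N := Real.sqrt_nonneg _
  have hAk : ∀ j, j ≤ K → Real.sqrt (I j) ≤ N := fun j hj =>
    hm₀ j (Finset.mem_range.2 (by omega))
  set Bsum := ∑ j ∈ Finset.Icc 1 K, Real.sqrt (S j) with hBsumdef
  have hBsumnn : 0 ≤ Bsum := Finset.sum_nonneg fun j _ => Real.sqrt_nonneg _
  -- N * N ≤ D * N
  have hIm₀ : I m₀ ≤ (2*τ*((Real.sqrt ε)⁻¹*(M*N))) * Bsum := by
    have h2 := chain m₀ hm₀K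
    have h3 : ∑ j ∈ Finset.Icc 1 m₀,
        (2*τ*((Real.sqrt ε)⁻¹ * (Real.sqrt (S j) * (M * Real.sqrt (I j)))))
        ≤ ∑ j ∈ Finset.Icc 1 K,
        (2*τ*((Real.sqrt ε)⁻¹ * (Real.sqrt (S j) * (M * Real.sqrt (I j))))) := by
      refine Finset.sum_le_sum_of_subset_of_nonneg (Finset.Icc_subset_Icc_right hm₀K) ?_
      intro j _ _
      exact mul_nonneg (by positivity : (0:ℝ) ≤ 2*τ)
        (mul_nonneg (inv_nonneg.2 (Real.sqrt_nonneg _))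
          (mul_nonneg (Real.sqrt_nonneg _) (mul_nonneg hM (Real.sqrt_nonneg _))))
    have h4 : ∑ j ∈ Finset.Icc 1 K,
        (2*τ*((Real.sqrt ε)⁻¹ * (Real.sqrt (S j) * (M * Real.sqrt (I j)))))
        ≤ (2*τ*((Real.sqrt ε)⁻¹*(M*N))) * Bsum := by
      rw [hBsumdef, Finset.mul_sum]
      refine Finset.sum_le_sum ?_
      intro j hj
      have hjK : j ≤ K := (Finset.mem_Icc.1 hj).2
      have h5 : Real.sqrt (S j) * (M * Real.sqrt (I j)) ≤ Real.sqrt (S j) * (M * N) :=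
        mul_le_mul_of_nonneg_left (mul_le_mul_of_nonneg_left (hAk j hjK) hM)
          (Real.sqrt_nonneg _)
      have h7 : (Real.sqrt ε)⁻¹ * (Real.sqrt (S j) * (M * Real.sqrt (I j)))
          ≤ (Real.sqrt ε)⁻¹ * (Real.sqrt (S j) * (M * N)) :=
        mul_le_mul_of_nonneg_left h5 (inv_nonneg.2 (Real.sqrt_nonneg _))
      calc 2*τ*((Real.sqrt ε)⁻¹ * (Real.sqrt (S j) * (M * Real.sqrt (I j))))
          ≤ 2*τ*((Real.sqrt ε)⁻¹ * (Real.sqrt (S j) * (M * N))) :=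
            mul_le_mul_of_nonneg_left h7 (by positivity)
        _ = 2*τ*((Real.sqrt ε)⁻¹*(M*N)) * Real.sqrt (S j) := by ring
    linarith
  -- Bsum ≤ √(K * 2E₀)
  have hBsum_le : Bsum ≤ Real.sqrt ((K:ℝ) * (2*E₀)) := by
    have hcheb := sq_sum_le_card_mul_sum_sq
      (s := Finset.Icc 1 K) (f := fun j => Real.sqrt (S j))
    have hcard : ((Finset.Icc 1 K).card : ℝ) = (K:ℝ) := by
      rw [Nat.card_Icc]; norm_num
    have hsq : ∑ j ∈ Finset.Icc 1 K, (Real.sqrt (S j))^2 = ∑ j ∈ Finset.Icc 1 K, S j :=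
      Finset.sum_congr rfl fun j _ => Real.sq_sqrt (hSnn j)
    have h1 : Bsum^2 ≤ (K:ℝ) * (2*E₀) := by
      rw [hBsumdef]
      calc (∑ j ∈ Finset.Icc 1 K, Real.sqrt (S j))^2
          ≤ ((Finset.Icc 1 K).card : ℝ) * ∑ j ∈ Finset.Icc 1 K, (Real.sqrt (S j))^2 := hcheb
        _ = (K:ℝ) * ∑ j ∈ Finset.Icc 1 K, S j := by rw [hcard, hsq]
        _ ≤ (K:ℝ) * (2*E₀) := mul_le_mul_of_nonneg_left sumS (Nat.cast_nonneg K)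
    calc Bsum = Real.sqrt (Bsum^2) := (Real.sqrt_sq hBsumnn).symm
      _ ≤ Real.sqrt ((K:ℝ) * (2*E₀)) := Real.sqrt_le_sqrt h1
  -- N ≤ D
  have hND : N ≤ 2*τ*((Real.sqrt ε)⁻¹*M) * Bsum := by
    rcases eq_or_lt_of_le hNnn with h | h
    · rw [← h]
      exact mul_nonneg (mul_nonneg (by positivity)
        (mul_nonneg (inv_nonneg.2 (Real.sqrt_nonneg _)) hM)) hBsumnn
    · have hNsq : N * N ≤ (2*τ*((Real.sqrt ε)⁻¹*M) * Bsum) * N :=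
        calc N * N = I m₀ := Real.mul_self_sqrt (hInn m₀)
          _ ≤ (2*τ*((Real.sqrt ε)⁻¹*(M*N))) * Bsum := hIm₀
          _ = (2*τ*((Real.sqrt ε)⁻¹*M) * Bsum) * N := by ring
      exact le_of_mul_le_mul_right hNsq h
  -- final constant identity
  have hRHS : 2 * Real.sqrt 2 * τ ^ ((1:ℝ)/2) * M * ε ^ (-(1:ℝ)/2) * (E₀ * (K:ℝ) * τ) ^ ((1:ℝ)/2)
      = 2*τ*((Real.sqrt ε)⁻¹*M) * Real.sqrt ((K:ℝ) * (2*E₀)) := by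
    rw [show ((-(1:ℝ))/2) = -((1:ℝ)/2) by norm_num, Real.rpow_neg hε.le,
      ← Real.sqrt_eq_rpow, ← Real.sqrt_eq_rpow, ← Real.sqrt_eq_rpow]
    rw [Real.sqrt_mul (Nat.cast_nonneg K), Real.sqrt_mul (by norm_num : (0:ℝ) ≤ 2),
      Real.sqrt_mul (mul_nonneg hE₀ (Nat.cast_nonneg K)), Real.sqrt_mul hE₀]
    have hττ : Real.sqrt τ * Real.sqrt τ = τ := Real.mul_self_sqrt hτ.le
    linear_combination (2 * Real.sqrt 2 * M * (Real.sqrt ε)⁻¹ * Real.sqrt E₀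
      * Real.sqrt (K:ℝ)) * hττ
  -- conclude
  intro k hk
  show Real.sqrt (I k) ≤ _
  rw [hRHS]
  calc Real.sqrt (I k) ≤ N := hAk k hk
    _ ≤ 2*τ*((Real.sqrt ε)⁻¹*M) * Bsum := hND
    _ ≤ 2*τ*((Real.sqrt ε)⁻¹*M) * Real.sqrt ((K:ℝ) * (2*E₀)) :=
        mul_le_mul_of_nonneg_left hBsum_le
          (mul_nonneg (by positivity) (mul_nonneg (inv_nonneg.2 (Real.sqrt_nonneg _)) hM))
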